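/- Soundness of descent supermartingale maps: Let P = while(G, P′) be a probabilistic while loop such that P′ terminates almost surely for every initial valuation and scheduler, and suppose there exists a DSM-map η for P with parameters ε > 0, c ∈ ℝ, interval [a,b]. Then for every initial valuation ν* and every scheduler σ, P^σ_{ν*}(T < ∞) = 1, i.e., P terminates almost surely. -/

import Mathlib

open MeasureTheory Filter
open scoped Classical

/-- The kind of statement attached to a label of a control-flow graph: an assignment with an
update function and successor label, a conditional branch, a nondeterministic branch, a
probabilistic branch with probability `p`, or the terminal label. -/
inductive LabelKind (Val : Type*) (SVal : Type*) (L : Type*) where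
  | assign (u : Val → SVal → Val) (next : L)
  | branch (φ : Val → Prop) (lthen lelse : L)
  | nondet (lthen lelse : L)
  | prob (p : ℝ) (lthen lelse : L)
  | terminal

/-- The control-flow graph of a probabilistic while loop `while G do P' od` : each label has a
kind, `lin` is the initial label (the loop head, a conditional branch on the guard `G` going
to the loop body `lbody` or to the terminal label `lout`), and `dist` is the (discrete)
probability distribution of the sampling valuations. -/
structure PWhileCFG (Val : Type*) (SVal : Type*) (L : Type*) where
  kind : L → LabelKind Val SVal L
  lin : L
  lout : L
  lbody : L
  guard : Val → Prop
  dist : SVal → ℝ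
  dist_nonneg : ∀ s, 0 ≤ dist s
  dist_sum : ∑' s, dist s = 1
  entry : kind lin = LabelKind.branch guard lbody lout
  exit : kind lout = LabelKind.terminal

/-- Conditions (D1)–(D5) of a descent supermartingale map `η` with parameters `ε, c, [a, b]`
w.r.t. the invariant `I`. -/
def IsDSM {Val SVal L : Type*} (C : PWhileCFG Val SVal L) (I : L → Set Val)
    (η : L → Val → ℝ) (ε c a b : ℝ) : Prop :=
  (∀ ℓ u next, C.kind ℓ = LabelKind.assign u next → ∀ ν ∈ I ℓ,
      (∀ s, η next (u ν s) - η ℓ ν ∈ Set.Icc a b) ∧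
      (∑' s, C.dist s * η next (u ν s)) ≤ η ℓ ν - ε) ∧
  (∀ ℓ φ l1 l2, C.kind ℓ = LabelKind.branch φ l1 l2 → ∀ ν ∈ I ℓ,
      (φ ν → η l1 ν - η ℓ ν ∈ Set.Icc a (min (-ε) b)) ∧
      (¬ φ ν → η l2 ν - η ℓ ν ∈ Set.Icc a (min (-ε) b))) ∧
  (∀ ℓ l1 l2, C.kind ℓ = LabelKind.nondet l1 l2 → ∀ ν ∈ I ℓ,
      η l1 ν - η ℓ ν ∈ Set.Icc a (min (-ε) b) ∧
      η l2 ν - η ℓ ν ∈ Set.Icc a (min (-ε) b)) ∧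
  (∀ ℓ p l1 l2, C.kind ℓ = LabelKind.prob p l1 l2 → ∀ ν ∈ I ℓ,
      η l1 ν - η ℓ ν ∈ Set.Icc a b ∧ η l2 ν - η ℓ ν ∈ Set.Icc a b ∧
      p * η l1 ν + (1 - p) * η l2 ν ≤ η ℓ ν - ε) ∧
  (∀ ν ∈ I C.lin, C.guard ν → c ≤ η C.lin ν)

/-- The process `X n = η (ℓ n, ν n)` along a run, with the convention that after termination
(i.e. at the terminal label) the value keeps decreasing by `ε` at each step. -/
noncomputable def dsmProc {Val SVal L Ω : Type*} (C : PWhileCFG Val SVal L)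
    (η : L → Val → ℝ) (ε : ℝ) (lab : ℕ → Ω → L) (vl : ℕ → Ω → Val) (n : ℕ) (ω : Ω) : ℝ :=
  η (lab n ω) (vl n ω) -
    ε * ∑ k ∈ Finset.range n,
      (if C.kind (lab k ω) = LabelKind.terminal then (1 : ℝ) else 0)

lemma aux_sq_bound {Ω : Type*} {m0 : MeasurableSpace Ω} {μ : Measure Ω} [IsProbabilityMeasure μ]
    (ℱ : Filtration ℕ m0) (ξ : ℕ → Ω → ℝ) (R : ℝ)
    (hmeas : ∀ n, StronglyMeasurable[ℱ (n + 1)] (ξ n))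
    (hbdd : ∀ n, ∀ᵐ ω ∂μ, |ξ n ω| ≤ R)
    (hcond : ∀ n, μ[ξ n|ℱ n] =ᵐ[μ] 0) (n : ℕ) :
    ∫ ω, (∑ k ∈ Finset.range n, ξ k ω) ^ 2 ∂μ ≤ n * R ^ 2 := by
  have hR : 0 ≤ R := by
    obtain ⟨ω, hω⟩ := (hbdd 0).exists
    exact (abs_nonneg _).trans hω
  have hSmeas : ∀ m, StronglyMeasurable[ℱ m] (fun ω => ∑ k ∈ Finset.range m, ξ k ω) := by
    intro m
    apply Finset.stronglyMeasurable_fun_sum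
    intro k hk
    exact (hmeas k).mono (ℱ.mono (Nat.succ_le_of_lt (Finset.mem_range.mp hk)))
  have hξint : ∀ k, Integrable (ξ k) μ := by
    intro k
    refine (integrable_const R).mono' ((hmeas k).mono (ℱ.le _)).aestronglyMeasurable ?_
    filter_upwards [hbdd k] with ω hω using by simpa [Real.norm_eq_abs] using hω
  have hSbdd : ∀ m, ∀ᵐ ω ∂μ, |∑ k ∈ Finset.range m, ξ k ω| ≤ m * R := by
    intro m
    filter_upwards [ae_all_iff.mpr hbdd] with ω hω
    calc |∑ k ∈ Finset.range m, ξ k ω| ≤ ∑ k ∈ Finset.range m, |ξ k ω| :=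
          Finset.abs_sum_le_sum_abs _ _
      _ ≤ ∑ _k ∈ Finset.range m, R := Finset.sum_le_sum fun k _ => hω k
      _ = m * R := by simp [mul_comm]
  induction n with
  | zero => simp
  | succ n ih =>
    have hexp : ∀ ω, (∑ k ∈ Finset.range (n + 1), ξ k ω) ^ 2 =
        (∑ k ∈ Finset.range n, ξ k ω) ^ 2 +
          ((2 * ((∑ k ∈ Finset.range n, ξ k ω) * ξ n ω)) + ξ n ω ^ 2) := by
      intro ω; rw [Finset.sum_range_succ]; ring
    have int1 : Integrable (fun ω => (∑ k ∈ Finset.range n, ξ k ω) ^ 2) μ := by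
      refine (integrable_const ((n * R) ^ 2)).mono'
        (((hSmeas n).mono (ℱ.le n)).pow 2).aestronglyMeasurable ?_
      filter_upwards [hSbdd n] with ω hω
      rw [Real.norm_eq_abs, abs_pow]
      exact pow_le_pow_left₀ (abs_nonneg _) hω 2
    have intm : Integrable ((fun ω => ∑ k ∈ Finset.range n, ξ k ω) * ξ n) μ := by
      refine (integrable_const ((n * R) * R)).mono'
        ((((hSmeas n).mono (ℱ.le n)).mul ((hmeas n).mono (ℱ.le _)))).aestronglyMeasurable ?_
      filter_upwards [hSbdd n, hbdd n] with ω h1 h2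
      rw [Pi.mul_apply, Real.norm_eq_abs, abs_mul]
      exact mul_le_mul h1 h2 (abs_nonneg _) (by positivity)
    have int2 : Integrable (fun ω => 2 * ((∑ k ∈ Finset.range n, ξ k ω) * ξ n ω)) μ :=
      intm.const_mul 2
    have int3 : Integrable (fun ω => ξ n ω ^ 2) μ := by
      refine (integrable_const (R ^ 2)).mono'
        (((hmeas n).mono (ℱ.le _)).pow 2).aestronglyMeasurable ?_
      filter_upwards [hbdd n] with ω hω
      rw [Real.norm_eq_abs, abs_pow]
      exact pow_le_pow_left₀ (abs_nonneg _) hω 2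
    have h0 : ∫ ω, (∑ k ∈ Finset.range n, ξ k ω) * ξ n ω ∂μ = 0 := by
      have hmul := condExp_mul_of_stronglyMeasurable_left (μ := μ) (hSmeas n) intm (hξint n)
      have : ∫ ω, ((fun ω => ∑ k ∈ Finset.range n, ξ k ω) * ξ n) ω ∂μ =
          ∫ ω, (μ[(fun ω => ∑ k ∈ Finset.range n, ξ k ω) * ξ n|ℱ n]) ω ∂μ :=
        (integral_condExp (ℱ.le n)).symm
      rw [show (fun ω => (∑ k ∈ Finset.range n, ξ k ω) * ξ n ω) =
          ((fun ω => ∑ k ∈ Finset.range n, ξ k ω) * ξ n) from rfl, this]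
      have heq : (μ[(fun ω => ∑ k ∈ Finset.range n, ξ k ω) * ξ n|ℱ n]) =ᵐ[μ] 0 := by
        filter_upwards [hmul, hcond n] with ω h1 h2
        rw [h1, Pi.mul_apply, h2]
        simp
      rw [integral_congr_ae heq]
      simp
    have hsq : ∫ ω, ξ n ω ^ 2 ∂μ ≤ R ^ 2 := by
      have : ∫ ω, ξ n ω ^ 2 ∂μ ≤ ∫ _ω, R ^ 2 ∂μ := by
        refine integral_mono_ae int3 (integrable_const _) ?_
        filter_upwards [hbdd n] with ω hω
        rw [← sq_abs]
        exact pow_le_pow_left₀ (abs_nonneg _) hω 2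
      simpa using this
    have h2 : ∫ ω, 2 * ((∑ k ∈ Finset.range n, ξ k ω) * ξ n ω) ∂μ = 0 := by
      rw [show (fun ω => 2 * ((∑ k ∈ Finset.range n, ξ k ω) * ξ n ω)) =
        (fun ω => (2:ℝ) • ((∑ k ∈ Finset.range n, ξ k ω) * ξ n ω)) from rfl,
        integral_smul, h0]
      simp
    have hsplit : ∫ ω, (∑ k ∈ Finset.range (n + 1), ξ k ω) ^ 2 ∂μ =
        (∫ ω, (∑ k ∈ Finset.range n, ξ k ω) ^ 2 ∂μ) +
          ((∫ ω, 2 * ((∑ k ∈ Finset.range n, ξ k ω) * ξ n ω) ∂μ) +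
            ∫ ω, ξ n ω ^ 2 ∂μ) := by
      simp_rw [hexp]
      have h3 := integral_add int1 (int2.add int3)
      simp only [Pi.add_apply] at h3
      rw [h3, integral_add int2 int3]
    rw [hsplit, h2]
    push_cast
    linarith


lemma aux_cheb {Ω : Type*} {m0 : MeasurableSpace Ω} {μ : Measure Ω} [IsProbabilityMeasure μ]
    {f : Ω → ℝ} (hint : Integrable (fun ω => f ω ^ 2) μ) {V r : ℝ}
    (hV : ∫ ω, f ω ^ 2 ∂μ ≤ V) (hr : 0 < r) :
    μ {ω | r ≤ f ω} ≤ ENNReal.ofReal (V / r ^ 2) := by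
  have hsub : {ω | r ≤ f ω} ⊆ {ω | r ^ 2 ≤ f ω ^ 2} := by
    intro ω hω
    exact pow_le_pow_left₀ hr.le hω 2
  have hmark := mul_meas_ge_le_integral_of_nonneg
    (ae_of_all μ fun ω => sq_nonneg (f ω)) hint (r ^ 2)
  have hfin : μ {ω | r ^ 2 ≤ f ω ^ 2} ≠ ⊤ := measure_ne_top _ _
  have htoReal : (μ {ω | r ^ 2 ≤ f ω ^ 2}).toReal ≤ V / r ^ 2 := by
    rw [le_div_iff₀ (by positivity)]
    calc (μ {ω | r ^ 2 ≤ f ω ^ 2}).toReal * r ^ 2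
        = r ^ 2 * (μ {ω | r ^ 2 ≤ f ω ^ 2}).toReal := by ring
      _ ≤ ∫ ω, f ω ^ 2 ∂μ := hmark
      _ ≤ V := hV
  calc μ {ω | r ≤ f ω} ≤ μ {ω | r ^ 2 ≤ f ω ^ 2} := measure_mono hsub
    _ = ENNReal.ofReal ((μ {ω | r ^ 2 ≤ f ω ^ 2}).toReal) := (ENNReal.ofReal_toReal hfin).symm
    _ ≤ ENNReal.ofReal (V / r ^ 2) := ENNReal.ofReal_le_ofReal htoReal

set_option maxHeartbeats 2000000

/-- Soundness of DSM-maps: Let `P = while (G, P')` be a probabilistic while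
loop (given by its control-flow graph `C`) such that the loop body `P'` terminates almost
surely for every initial valuation and scheduler (so that along any run, almost surely the
run either reaches the terminal label or revisits the loop head `lin` infinitely often), and
suppose there exists a DSM-map `η` for `P` with parameters `ε > 0`, `c`, and interval
`[a, b]`.  Then for every initial valuation `ν*` and every scheduler — i.e. for every process
`(ℓ n, ν n)` consistent with the MDP semantics of `C` started at `(lin, ν*)` — the program
terminates almost surely: `P(T < ∞) = 1`, i.e. the run reaches the terminal label `lout`
with probability `1`. -/
theorem stmt15 {Val SVal L Ω : Type*} [Countable SVal]
    {m0 : MeasurableSpace Ω} {μ : Measure Ω} [IsProbabilityMeasure μ]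
    (C : PWhileCFG Val SVal L) (I : L → Set Val) (η : L → Val → ℝ) (ε c a b : ℝ)
    (hε : 0 < ε) (hab : a < b) (haε : a ≤ -ε) (hεb : -ε ≤ b)
    (hDSM : IsDSM C I η ε c a b)
    (ℱ : Filtration ℕ m0) (lab : ℕ → Ω → L) (vl : ℕ → Ω → Val) (ν₀ : Val)
    -- the run starts at the loop head with the initial valuation ν₀
    (hstart : (∀ ω, lab 0 ω = C.lin) ∧ (∀ ω, vl 0 ω = ν₀))
    -- measurability/adaptedness of the run
    (hAdapted : Adapted ℱ (fun n ω => η (lab n ω) (vl n ω)))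
    (hkind : ∀ n K, MeasurableSet[ℱ n] {ω | C.kind (lab n ω) = K})
    (hlab : ∀ n ℓ, MeasurableSet[ℱ n] {ω | lab n ω = ℓ})
    (hInt : ∀ n, Integrable (fun ω => η (lab n ω) (vl n ω)) μ)
    -- the invariant holds along the run
    (hInv : ∀ n, ∀ᵐ ω ∂μ, vl n ω ∈ I (lab n ω))
    -- the run follows the MDP semantics of the control-flow graph
    (hstepAssign : ∀ n, ∀ᵐ ω ∂μ, ∀ u next, C.kind (lab n ω) = LabelKind.assign u next →
        lab (n + 1) ω = next ∧ ∃ s, vl (n + 1) ω = u (vl n ω) s)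
    (hstepBranch : ∀ n, ∀ᵐ ω ∂μ, ∀ φ l1 l2, C.kind (lab n ω) = LabelKind.branch φ l1 l2 →
        vl (n + 1) ω = vl n ω ∧
          ((φ (vl n ω) ∧ lab (n + 1) ω = l1) ∨ (¬ φ (vl n ω) ∧ lab (n + 1) ω = l2)))
    (hstepNondet : ∀ n, ∀ᵐ ω ∂μ, ∀ l1 l2, C.kind (lab n ω) = LabelKind.nondet l1 l2 →
        vl (n + 1) ω = vl n ω ∧ (lab (n + 1) ω = l1 ∨ lab (n + 1) ω = l2))
    (hstepProb : ∀ n, ∀ᵐ ω ∂μ, ∀ p l1 l2, C.kind (lab n ω) = LabelKind.prob p l1 l2 →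
        vl (n + 1) ω = vl n ω ∧ (lab (n + 1) ω = l1 ∨ lab (n + 1) ω = l2))
    (hstepTerm : ∀ n, ∀ᵐ ω ∂μ, C.kind (lab n ω) = LabelKind.terminal →
        lab (n + 1) ω = lab n ω ∧ vl (n + 1) ω = vl n ω)
    -- the conditional one-step law of the run, at sampling and probabilistic labels
    (hcondAssign : ∀ n, ∀ᵐ ω ∂μ, ∀ u next, C.kind (lab n ω) = LabelKind.assign u next →
        (μ[fun ω' => η (lab (n + 1) ω') (vl (n + 1) ω')|ℱ n]) ω =
          ∑' s, C.dist s * η next (u (vl n ω) s))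
    (hcondProb : ∀ n, ∀ᵐ ω ∂μ, ∀ p l1 l2, C.kind (lab n ω) = LabelKind.prob p l1 l2 →
        (μ[fun ω' => η (lab (n + 1) ω') (vl (n + 1) ω')|ℱ n]) ω =
          p * η l1 (vl n ω) + (1 - p) * η l2 (vl n ω))
    -- the loop body P' terminates almost surely (for every initial valuation and scheduler):
    -- almost surely, the run either terminates or returns to the loop head infinitely often
    (hBody : ∀ᵐ ω ∂μ,
        (∃ n, lab n ω = C.lout) ∨ {n : ℕ | lab n ω = C.lin}.Infinite) :
    μ {ω | ∃ n, lab n ω = C.lout} = 1 := by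

  obtain ⟨hstart1, hstart2⟩ := hstart
  set x0 : ℝ := η C.lin ν₀ with hx0def
  -- the indicator of the terminal labels, and the DSM process X
  set J : ℕ → Ω → ℝ := fun n ω =>
    if C.kind (lab n ω) = LabelKind.terminal then (1 : ℝ) else 0 with hJdef
  set X : ℕ → Ω → ℝ := fun n ω =>
    η (lab n ω) (vl n ω) - ε * ∑ k ∈ Finset.range n, J k ω with hXdef
  have hJmeas : ∀ n, StronglyMeasurable[ℱ n] (J n) := by
    intro n
    have : J n = Set.indicator {ω | C.kind (lab n ω) = LabelKind.terminal}
        (fun _ => (1 : ℝ)) := by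
      funext ω
      simp only [hJdef, Set.indicator_apply, Set.mem_setOf_eq]
    rw [this]
    exact stronglyMeasurable_const.indicator (hkind n _)
  have hJint : ∀ n, Integrable (J n) μ := by
    intro n
    refine (integrable_const (1 : ℝ)).mono'
      ((hJmeas n).mono (ℱ.le n)).aestronglyMeasurable (ae_of_all μ fun ω => ?_)
    simp only [hJdef, Real.norm_eq_abs]
    split_ifs <;> norm_num
  have hSummeas : ∀ n, StronglyMeasurable[ℱ n] (fun ω => ∑ k ∈ Finset.range n, J k ω) := by
    intro n
    exact Finset.stronglyMeasurable_fun_sum _ fun k hk =>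
      (hJmeas k).mono (ℱ.mono (Finset.mem_range.mp hk).le)
  have hXmeas : ∀ n, StronglyMeasurable[ℱ n] (X n) :=
    fun n => (hAdapted n).stronglyMeasurable.sub (stronglyMeasurable_const.mul (hSummeas n))
  have hXint : ∀ n, Integrable (X n) μ :=
    fun n => (hInt n).sub ((integrable_finset_sum _ fun k _ => hJint k).const_mul ε)
  -- the increments are in [a, b] a.e.
  set Dp : ℕ → Ω → ℝ := fun n ω => X (n + 1) ω - X n ω with hDpdef
  have hDpint : ∀ n, Integrable (Dp n) μ := fun n => (hXint (n + 1)).sub (hXint n)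
  have hDprw : ∀ n ω, Dp n ω =
      η (lab (n + 1) ω) (vl (n + 1) ω) - η (lab n ω) (vl n ω) - ε * J n ω := by
    intro n ω
    simp only [hDpdef, hXdef, Finset.sum_range_succ]
    ring
  have hD : ∀ n, ∀ᵐ ω ∂μ, a ≤ Dp n ω ∧ Dp n ω ≤ b := by
    intro n
    filter_upwards [hInv n, hstepAssign n, hstepBranch n, hstepNondet n, hstepProb n,
      hstepTerm n] with ω hI hsA hsB hsN hsP hsT
    rw [hDprw n ω]
    cases hK : C.kind (lab n ω) with
    | assign u next =>
      obtain ⟨hl, s, hv⟩ := hsA u next hK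
      have hmem := ((hDSM.1 _ u next hK _ hI).1 s)
      rw [hl, hv]
      simp only [hJdef, hK, reduceCtorEq, if_false, mul_zero, sub_zero]
      exact ⟨hmem.1, hmem.2⟩
    | branch φ l1 l2 =>
      obtain ⟨hv, hc⟩ := hsB φ l1 l2 hK
      have hd := hDSM.2.1 _ φ l1 l2 hK _ hI
      simp only [hJdef, hK, reduceCtorEq, if_false, mul_zero, sub_zero]
      rcases hc with ⟨hφ, hl⟩ | ⟨hφ, hl⟩
      · have hmem := (hd.1 hφ); rw [hl, hv]
        exact ⟨hmem.1, hmem.2.trans (min_le_right _ _)⟩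
      · have hmem := (hd.2 hφ); rw [hl, hv]
        exact ⟨hmem.1, hmem.2.trans (min_le_right _ _)⟩
    | nondet l1 l2 =>
      obtain ⟨hv, hc⟩ := hsN l1 l2 hK
      have hd := hDSM.2.2.1 _ l1 l2 hK _ hI
      simp only [hJdef, hK, reduceCtorEq, if_false, mul_zero, sub_zero]
      rcases hc with hl | hl
      · rw [hl, hv]; exact ⟨hd.1.1, hd.1.2.trans (min_le_right _ _)⟩
      · rw [hl, hv]; exact ⟨hd.2.1, hd.2.2.trans (min_le_right _ _)⟩
    | prob p l1 l2 =>
      obtain ⟨hv, hc⟩ := hsP p l1 l2 hK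
      have hd := hDSM.2.2.2.1 _ p l1 l2 hK _ hI
      simp only [hJdef, hK, reduceCtorEq, if_false, mul_zero, sub_zero]
      rcases hc with hl | hl
      · rw [hl, hv]; exact ⟨hd.1.1, hd.1.2⟩
      · rw [hl, hv]; exact ⟨hd.2.1.1, hd.2.1.2⟩
    | terminal =>
      obtain ⟨hl, hv⟩ := hsT hK
      rw [hl, hv]
      simp only [hJdef, hK, if_true, mul_one, sub_self, zero_sub]
      constructor <;> linarith
  -- the conditional supermartingale inequality
  have hcondX : ∀ n, (μ[X (n + 1)|ℱ n]) ≤ᵐ[μ] fun ω => X n ω - ε := by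
    intro n
    set G : Ω → ℝ := μ[fun ω => η (lab (n + 1) ω) (vl (n + 1) ω)|ℱ n] with hGdef
    set q : Ω → ℝ := fun ω => η (lab n ω) (vl n ω) - ε + ε * J n ω with hqdef
    have hqmeas : StronglyMeasurable[ℱ n] q :=
      ((hAdapted n).stronglyMeasurable.sub stronglyMeasurable_const).add
        (stronglyMeasurable_const.mul (hJmeas n))
    have hqint : Integrable q μ :=
      ((hInt n).sub (integrable_const ε)).add ((hJint n).const_mul ε)
    have hcase : ∀ᵐ ω ∂μ, G ω ≤ q ω ∨ η (lab (n + 1) ω) (vl (n + 1) ω) ≤ q ω := by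
      filter_upwards [hInv n, hcondAssign n, hcondProb n, hstepBranch n, hstepNondet n,
        hstepTerm n] with ω hI hcA hcP hsB hsN hsT
      cases hK : C.kind (lab n ω) with
      | assign u next =>
        left
        rw [hGdef, hcA u next hK]
        have hle := (hDSM.1 _ u next hK _ hI).2
        simp only [hqdef, hJdef, hK, reduceCtorEq, if_false, mul_zero, add_zero]
        exact hle
      | branch φ l1 l2 =>
        right
        obtain ⟨hv, hc⟩ := hsB φ l1 l2 hK
        have hd := hDSM.2.1 _ φ l1 l2 hK _ hI
        simp only [hqdef, hJdef, hK, reduceCtorEq, if_false, mul_zero, add_zero]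
        rcases hc with ⟨hφ, hl⟩ | ⟨hφ, hl⟩
        · have h2 := (hd.1 hφ).2
          have h3 : min (-ε) b ≤ -ε := min_le_left _ _
          rw [hl, hv]; linarith
        · have h2 := (hd.2 hφ).2
          have h3 : min (-ε) b ≤ -ε := min_le_left _ _
          rw [hl, hv]; linarith
      | nondet l1 l2 =>
        right
        obtain ⟨hv, hc⟩ := hsN l1 l2 hK
        have hd := hDSM.2.2.1 _ l1 l2 hK _ hI
        simp only [hqdef, hJdef, hK, reduceCtorEq, if_false, mul_zero, add_zero]
        have h3 : min (-ε) b ≤ -ε := min_le_left _ _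
        rcases hc with hl | hl
        · have h2 := hd.1.2; rw [hl, hv]; linarith
        · have h2 := hd.2.2; rw [hl, hv]; linarith
      | prob p l1 l2 =>
        left
        rw [hGdef, hcP p l1 l2 hK]
        have hle := (hDSM.2.2.2.1 _ p l1 l2 hK _ hI).2.2
        simp only [hqdef, hJdef, hK, reduceCtorEq, if_false, mul_zero, add_zero]
        exact hle
      | terminal =>
        right
        obtain ⟨hl, hv⟩ := hsT hK
        rw [hl, hv]
        simp only [hqdef, hJdef, hK, if_true, mul_one]
        linarith
    -- the bad set has measure zero
    set B : Set Ω := {ω | q ω < G ω} with hBdef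
    have hB : MeasurableSet[ℱ n] B :=
      measurableSet_lt hqmeas.measurable stronglyMeasurable_condExp.measurable
    have hB0 : MeasurableSet B := ℱ.le n _ hB
    have hμB : μ B = 0 := by
      have h1 : ∫ ω in B, G ω ∂μ = ∫ ω in B, η (lab (n + 1) ω) (vl (n + 1) ω) ∂μ :=
        setIntegral_condExp (ℱ.le n) (hInt (n + 1)) hB
      have h2 : ∫ ω in B, η (lab (n + 1) ω) (vl (n + 1) ω) ∂μ ≤ ∫ ω in B, q ω ∂μ := by
        refine setIntegral_mono_ae_restrict (hInt (n + 1)).integrableOn hqint.integrableOn ?_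
        rw [Filter.EventuallyLE, ae_restrict_iff' hB0]
        filter_upwards [hcase] with ω hω hmem
        rcases hω with h | h
        · exact absurd h (not_le.mpr hmem)
        · exact h
      have hre : ∫ ω in B, (G ω - q ω) ∂μ ≤ 0 := by
        rw [integral_sub integrable_condExp.integrableOn hqint.integrableOn]
        rw [h1]
        linarith
      have hpos : ∀ᵐ ω ∂μ.restrict B, 0 < G ω - q ω := by
        rw [ae_restrict_iff' hB0]
        exact ae_of_all μ fun ω h => sub_pos.mpr h
      have hze : ∫ ω in B, (G ω - q ω) ∂μ = 0 :=
        le_antisymm hre (integral_nonneg_of_ae (hpos.mono fun ω h => h.le))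
      have hzero := (integral_eq_zero_iff_of_nonneg_ae (hpos.mono fun ω h => h.le)
        (integrable_condExp.sub hqint).integrableOn).mp hze
      have hfalse : ∀ᵐ _ω ∂μ.restrict B, False := by
        filter_upwards [hpos, hzero] with ω h1' h2'
        simp only [Pi.zero_apply] at h2'
        rw [h2'] at h1'
        exact lt_irrefl 0 h1'
      have : μ.restrict B = 0 := ae_eq_bot.mp (eventually_false_iff_eq_bot.mp hfalse)
      exact Measure.restrict_eq_zero.mp this
    have hGq : ∀ᵐ ω ∂μ, G ω ≤ q ω := by
      have : ∀ᵐ ω ∂μ, ω ∉ B := measure_eq_zero_iff_ae_notMem.mp hμB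
      filter_upwards [this] with ω h
      exact not_lt.mp h
    -- condexp algebra
    set T : Ω → ℝ := fun ω => ε * ∑ k ∈ Finset.range (n + 1), J k ω with hTdef
    have hTmeas : StronglyMeasurable[ℱ n] T :=
      stronglyMeasurable_const.mul (Finset.stronglyMeasurable_fun_sum _ fun k hk =>
        (hJmeas k).mono (ℱ.mono (Nat.lt_succ_iff.mp (Finset.mem_range.mp hk))))
    have hTint : Integrable T μ := (integrable_finset_sum _ fun k _ => hJint k).const_mul ε
    have hXsplit : X (n + 1) = (fun ω => η (lab (n + 1) ω) (vl (n + 1) ω)) - T := rfl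
    have hsub := condExp_sub (μ := μ) (m := ℱ n) (hInt (n + 1)) hTint
    have hTcond : μ[T|ℱ n] = T := condExp_of_stronglyMeasurable (ℱ.le n) hTmeas hTint
    rw [hXsplit]
    filter_upwards [hsub, hGq] with ω h1 h2
    rw [h1]
    simp only [Pi.sub_apply, hTcond, ← hGdef]
    have : q ω - T ω = X n ω - ε := by
      simp only [hqdef, hTdef, hXdef, Finset.sum_range_succ]
      ring
    linarith [h2, this]
  -- conditional increments
  set cnd : ℕ → Ω → ℝ := fun n => μ[Dp n|ℱ n] with hcnddef
  have hcnd_le : ∀ n, ∀ᵐ ω ∂μ, cnd n ω ≤ -ε := by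
    intro n
    have h1 := condExp_sub (μ := μ) (m := ℱ n) (hXint (n + 1)) (hXint n)
    have h2 : μ[X n|ℱ n] = X n := condExp_of_stronglyMeasurable (ℱ.le n) (hXmeas n) (hXint n)
    have h3 : Dp n = X (n + 1) - X n := rfl
    filter_upwards [h1, hcondX n] with ω hω h4
    simp only [hcnddef, h3, hω, Pi.sub_apply, h2]
    linarith
  have hcnd_lb : ∀ n, ∀ᵐ ω ∂μ, a ≤ cnd n ω := by
    intro n
    have h1 := condExp_mono (μ := μ) (m := ℱ n) (integrable_const a) (hDpint n)
      ((hD n).mono fun ω h => h.1)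
    rw [condExp_const (ℱ.le n)] at h1
    exact h1
  -- the centered increments
  set ξ : ℕ → Ω → ℝ := fun n ω => Dp n ω - cnd n ω with hξdef
  have hξmeas : ∀ n, StronglyMeasurable[ℱ (n + 1)] (ξ n) := fun n =>
    (((hXmeas (n + 1)).sub ((hXmeas n).mono (ℱ.mono n.le_succ)))).sub
      (stronglyMeasurable_condExp.mono (ℱ.mono n.le_succ))
  have hξbdd : ∀ n, ∀ᵐ ω ∂μ, |ξ n ω| ≤ b - a := by
    intro n
    filter_upwards [hD n, hcnd_le n, hcnd_lb n] with ω h1 h2 h3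
    rw [abs_le]
    simp only [hξdef]
    constructor <;> linarith [h1.1, h1.2, hεb]
  have hξcond : ∀ n, μ[ξ n|ℱ n] =ᵐ[μ] 0 := by
    intro n
    have hcint : Integrable (cnd n) μ := integrable_condExp
    have h1 := condExp_sub (μ := μ) (m := ℱ n) (hDpint n) hcint
    have h2 : μ[cnd n|ℱ n] = cnd n :=
      condExp_of_stronglyMeasurable (ℱ.le n) stronglyMeasurable_condExp integrable_condExp
    have h3 : ξ n = Dp n - cnd n := rfl
    filter_upwards [h1] with ω hω
    rw [h3, hω, Pi.sub_apply, h2]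
    simp only [h3, hω, Pi.sub_apply, h2, Pi.zero_apply, sub_self, hcnddef]
  
  -- the martingale partial sums and their second moments
  set R : ℝ := b - a with hRdef
  have hRpos : 0 < R := sub_pos.mpr hab
  set M : ℕ → Ω → ℝ := fun n ω => ∑ k ∈ Finset.range n, ξ k ω with hMdef
  have hM2 : ∀ n, ∫ ω, M n ω ^ 2 ∂μ ≤ n * R ^ 2 := fun n =>
    aux_sq_bound ℱ ξ R hξmeas hξbdd hξcond n
  have hMmeas : ∀ n, StronglyMeasurable (M n) := fun n =>
    Finset.stronglyMeasurable_fun_sum _ fun k _ => (hξmeas k).mono (ℱ.le _)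
  have hMbdd : ∀ n, ∀ᵐ ω ∂μ, |M n ω| ≤ n * R := by
    intro n
    filter_upwards [ae_all_iff.mpr hξbdd] with ω hω
    calc |M n ω| ≤ ∑ k ∈ Finset.range n, |ξ k ω| := Finset.abs_sum_le_sum_abs _ _
      _ ≤ ∑ _k ∈ Finset.range n, R := Finset.sum_le_sum fun k _ => hω k
      _ = n * R := by simp [mul_comm]
  have hM2int : ∀ n, Integrable (fun ω => M n ω ^ 2) μ := by
    intro n
    refine (integrable_const ((n * R) ^ 2)).mono'
      ((hMmeas n).pow 2).aestronglyMeasurable ?_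
    filter_upwards [hMbdd n] with ω hω
    rw [Real.norm_eq_abs, abs_pow]
    exact pow_le_pow_left₀ (abs_nonneg _) hω 2
  -- constants
  set bp : ℝ := max b 0 with hbpdef
  have hbp0 : 0 ≤ bp := le_max_right _ _
  have hbbp : b ≤ bp := le_max_left _ _
  set z : ℝ := (2 / ε) * (2 * bp + |x0 - c| + 1) + bp with hzdef
  set K : ℕ := max 1 ⌈z⌉₊ with hKdef
  have hK1 : 1 ≤ K := le_max_left _ _
  set r : ℕ → ℝ := fun k => (c - x0) + ε * k ^ 2 - (2 * k + 1) * bp with hrdef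
  have hrK : ∀ k, K ≤ k → ε / 2 * (k : ℝ) ^ 2 ≤ r k := by
    intro k hk
    have hk1 : (1 : ℝ) ≤ (k : ℝ) := by exact_mod_cast hK1.trans hk
    have hkz : z ≤ (k : ℝ) :=
      le_trans (Nat.le_ceil z) (by exact_mod_cast (le_max_right 1 ⌈z⌉₊).trans hk)
    have hznn : 0 ≤ (2 / ε) * (2 * bp + |x0 - c| + 1) := by positivity
    have hkbp : bp ≤ (k : ℝ) := by rw [hzdef] at hkz; linarith
    have hkz2 : (2 / ε) * (2 * bp + |x0 - c| + 1) ≤ (k : ℝ) := by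
      rw [hzdef] at hkz; linarith
    have h1 : 2 * bp + |x0 - c| + 1 ≤ ε * (k : ℝ) / 2 := by
      have heq : 2 * bp + |x0 - c| + 1 = (ε / 2) * ((2 / ε) * (2 * bp + |x0 - c| + 1)) := by
        field_simp
      rw [heq]
      calc (ε / 2) * ((2 / ε) * (2 * bp + |x0 - c| + 1)) ≤ (ε / 2) * (k : ℝ) :=
            mul_le_mul_of_nonneg_left hkz2 (by positivity)
        _ = ε * (k : ℝ) / 2 := by ring
    have habs : x0 - c ≤ |x0 - c| := le_abs_self _
    have habs0 : 0 ≤ |x0 - c| := abs_nonneg _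
    simp only [hrdef]
    nlinarith [mul_le_mul_of_nonneg_right h1 (by positivity : (0 : ℝ) ≤ (k : ℝ)),
      mul_nonneg (sub_nonneg.mpr hk1) habs0]
  -- the bad events and Borel-Cantelli
  set E : ℕ → Set Ω := fun k => {ω | r k ≤ M (k ^ 2) ω} with hEdef
  set F : ℕ → Set Ω := fun j => E (j + K) with hFdef
  have hEbound : ∀ k, K ≤ k →
      μ (E k) ≤ ENNReal.ofReal (4 * R ^ 2 / ε ^ 2 * (1 / (k : ℝ) ^ 2)) := by
    intro k hk
    have hk1 : (1 : ℝ) ≤ (k : ℝ) := by exact_mod_cast hK1.trans hk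
    have hρ : 0 < ε / 2 * (k : ℝ) ^ 2 := by positivity
    have hsub : E k ⊆ {ω | ε / 2 * (k : ℝ) ^ 2 ≤ M (k ^ 2) ω} :=
      fun ω hω => le_trans (hrK k hk) hω
    have hVle : ∫ ω, M (k ^ 2) ω ^ 2 ∂μ ≤ ((k : ℝ) ^ 2) * R ^ 2 := by
      have h := hM2 (k ^ 2)
      push_cast at h
      exact h
    have hcheb := aux_cheb (hM2int (k ^ 2)) hVle hρ
    refine le_trans (measure_mono hsub) (le_trans hcheb (le_of_eq ?_))
    congr 1
    have hkne : (k : ℝ) ≠ 0 := by linarith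
    field_simp
    ring
  have hFsum : ∑' j, μ (F j) ≠ ⊤ := by
    have hb : ∀ j : ℕ, μ (F j) ≤
        ENNReal.ofReal (4 * R ^ 2 / ε ^ 2 * (1 / ((j : ℝ) + 1) ^ 2)) := by
      intro j
      refine le_trans (hEbound (j + K) (Nat.le_add_left K j)) (ENNReal.ofReal_le_ofReal ?_)
      have hKr : (1 : ℝ) ≤ (K : ℝ) := by exact_mod_cast hK1
      have h1 : ((j : ℝ) + 1) ≤ ((j + K : ℕ) : ℝ) := by push_cast; linarith
      have h2 : (0 : ℝ) < ((j : ℝ) + 1) ^ 2 := by positivity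
      have h3 : ((j : ℝ) + 1) ^ 2 ≤ ((j + K : ℕ) : ℝ) ^ 2 := by nlinarith
      have h4 := one_div_le_one_div_of_le h2 h3
      have hC : (0 : ℝ) ≤ 4 * R ^ 2 / ε ^ 2 := by positivity
      exact mul_le_mul_of_nonneg_left h4 hC
    have hsummable : Summable (fun j : ℕ => 4 * R ^ 2 / ε ^ 2 * (1 / ((j : ℝ) + 1) ^ 2)) := by
      have h0 : Summable (fun n : ℕ => 1 / (n : ℝ) ^ 2) :=
        Real.summable_one_div_nat_pow.mpr one_lt_two
      have h1 := (summable_nat_add_iff 1).mpr h0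
      have h2 : (fun j : ℕ => 1 / ((j : ℝ) + 1) ^ 2) =
          fun j : ℕ => 1 / (((j + 1 : ℕ)) : ℝ) ^ 2 := by
        funext j; push_cast; ring_nf
      exact ((h2 ▸ h1)).mul_left _
    have hle : ∑' j, μ (F j) ≤
        ENNReal.ofReal (∑' j : ℕ, 4 * R ^ 2 / ε ^ 2 * (1 / ((j : ℝ) + 1) ^ 2)) := by
      calc ∑' j, μ (F j)
          ≤ ∑' j : ℕ, ENNReal.ofReal (4 * R ^ 2 / ε ^ 2 * (1 / ((j : ℝ) + 1) ^ 2)) :=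
            ENNReal.tsum_le_tsum hb
        _ = ENNReal.ofReal (∑' j : ℕ, 4 * R ^ 2 / ε ^ 2 * (1 / ((j : ℝ) + 1) ^ 2)) :=
            (ENNReal.ofReal_tsum_of_nonneg (fun j => by positivity) hsummable).symm
    exact ne_top_of_le_ne_top ENNReal.ofReal_ne_top hle
  have hnotmem : ∀ᵐ ω ∂μ, ω ∉ limsup F atTop :=
    measure_eq_zero_iff_ae_notMem.mp (measure_limsup_atTop_eq_zero hFsum)
  -- the main almost-sure argument
  have hmain : ∀ᵐ ω ∂μ, ∃ n, lab n ω = C.lout := by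
    filter_upwards [hBody, ae_all_iff.mpr hD, ae_all_iff.mpr hcnd_le, ae_all_iff.mpr hInv,
      ae_all_iff.mpr hstepBranch, ae_all_iff.mpr hstepTerm, hnotmem] with ω hBω hDω hcndω hIω
      hsBω hsTω hLω
    by_contra hnt
    push_neg at hnt
    have hlin : {n | lab n ω = C.lin}.Infinite := by
      rcases hBω with ⟨n, hn⟩ | h
      · exact absurd hn (hnt n)
      · exact h
    have hterm : ∀ m, C.kind (lab m ω) ≠ LabelKind.terminal := by
      intro m hm
      have hstay : ∀ j, lab (m + j) ω = lab m ω := by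
        intro j
        induction j with
        | zero => rfl
        | succ j ih =>
          have hk : C.kind (lab (m + j) ω) = LabelKind.terminal := by rw [ih]; exact hm
          have h := (hsTω (m + j) hk).1
          rw [show m + (j + 1) = m + j + 1 from rfl, h, ih]
      have hsubfin : {n | lab n ω = C.lin} ⊆ Set.Iio m := by
        intro n hn
        by_contra hcon
        simp only [Set.mem_Iio, not_lt] at hcon
        have heq : lab n ω = lab m ω := by
          have h := hstay (n - m)
          rwa [Nat.add_sub_cancel' hcon] at h
        have hbad : C.kind C.lin = LabelKind.terminal := by
          rw [← hn, heq]; exact hm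
        rw [C.entry] at hbad
        exact absurd hbad (by simp)
      exact hlin (Set.Finite.subset (Set.finite_Iio m) hsubfin)
    have hXη : ∀ n, X n ω = η (lab n ω) (vl n ω) := by
      intro n
      simp only [hXdef]
      rw [Finset.sum_eq_zero, mul_zero, sub_zero]
      intro k _
      simp only [hJdef]
      rw [if_neg (hterm k)]
    have hc' : ∀ n, lab n ω = C.lin → c ≤ X n ω := by
      intro n hn
      have hk : C.kind (lab n ω) = LabelKind.branch C.guard C.lbody C.lout := by
        rw [hn, C.entry]
      obtain ⟨hv, hcases⟩ := hsBω n C.guard C.lbody C.lout hk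
      rcases hcases with ⟨hφ, _⟩ | ⟨_, hl⟩
      · have hI' : vl n ω ∈ I C.lin := by rw [← hn]; exact hIω n
        have h := hDSM.2.2.2.2 (vl n ω) hI' hφ
        rw [hXη n, hn]; exact h
      · exact absurd hl (hnt (n + 1))
    have hX0 : X 0 ω = x0 := by
      simp [hXdef, hstart1 ω, hstart2 ω, hx0def]
    refine hLω ?_
    rw [mem_limsup_iff_frequently_mem, frequently_atTop]
    intro j₀
    obtain ⟨n, hnlin, hngt⟩ := hlin.exists_gt ((j₀ + K) ^ 2)
    set k : ℕ := Nat.sqrt n with hkdef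
    have hk2n : k ^ 2 ≤ n := Nat.sqrt_le' n
    have hnk : n < (k + 1) ^ 2 := Nat.lt_succ_sqrt' n
    have hkK : j₀ + K ≤ k := Nat.le_sqrt'.mpr (le_of_lt hngt)
    have hKk : K ≤ k := le_trans (Nat.le_add_left K j₀) hkK
    refine ⟨k - K, Nat.le_sub_of_add_le hkK, ?_⟩
    have hFE : F (k - K) = E k := by
      simp only [hFdef]
      rw [Nat.sub_add_cancel hKk]
    rw [hFE]
    show r k ≤ M (k ^ 2) ω
    have hMeq : M (k ^ 2) ω = (X (k ^ 2) ω - X 0 ω) -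
        ∑ i ∈ Finset.range (k ^ 2), cnd i ω := by
      simp only [hMdef, hξdef, hDpdef]
      rw [Finset.sum_sub_distrib]
      congr 1
      exact Finset.sum_range_sub (fun i => X i ω) (k ^ 2)
    have hcsum : ∑ i ∈ Finset.range (k ^ 2), cnd i ω ≤ ((k ^ 2 : ℕ) : ℝ) * (-ε) := by
      calc ∑ i ∈ Finset.range (k ^ 2), cnd i ω
          ≤ ∑ _i ∈ Finset.range (k ^ 2), (-ε) := Finset.sum_le_sum fun i _ => hcndω i
        _ = ((k ^ 2 : ℕ) : ℝ) * (-ε) := by simp [mul_comm]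
    have hXk : c - (2 * (k : ℝ) + 1) * bp ≤ X (k ^ 2) ω := by
      have htel : X n ω - X (k ^ 2) ω = ∑ i ∈ Finset.Ico (k ^ 2) n, Dp i ω := by
        simp only [hDpdef]
        rw [Finset.sum_Ico_eq_sub _ hk2n,
          Finset.sum_range_sub (f := fun i => X i ω),
          Finset.sum_range_sub (f := fun i => X i ω)]
        ring
      have hsum : ∑ i ∈ Finset.Ico (k ^ 2) n, Dp i ω ≤ ((n - k ^ 2 : ℕ) : ℝ) * bp := by
        calc ∑ i ∈ Finset.Ico (k ^ 2) n, Dp i ω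
            ≤ ∑ _i ∈ Finset.Ico (k ^ 2) n, bp :=
              Finset.sum_le_sum fun i _ => le_trans (hDω i).2 hbbp
          _ = ((n - k ^ 2 : ℕ) : ℝ) * bp := by
              rw [Finset.sum_const, Nat.card_Ico]
              simp [nsmul_eq_mul]
      have hcardN : n - k ^ 2 ≤ 2 * k + 1 := by
        have h1 : n < k * k + 2 * k + 1 := by
          calc n < (k + 1) ^ 2 := hnk
            _ = k * k + 2 * k + 1 := by ring
        have h2 : k ^ 2 = k * k := by ring
        omega
      have hcard : ((n - k ^ 2 : ℕ) : ℝ) ≤ 2 * (k : ℝ) + 1 := by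
        have : ((n - k ^ 2 : ℕ) : ℝ) ≤ ((2 * k + 1 : ℕ) : ℝ) := Nat.cast_le.mpr hcardN
        push_cast at this
        linarith
      have hcn : c ≤ X n ω := hc' n hnlin
      nlinarith [mul_le_mul_of_nonneg_right hcard hbp0]
    rw [hMeq, hX0]
    simp only [hrdef]
    push_cast at hcsum
    nlinarith [hXk, hcsum]
  -- conclusion
  have hNmeas : MeasurableSet {ω | ∃ n, lab n ω = C.lout} := by
    have h : {ω | ∃ n, lab n ω = C.lout} = ⋃ n, {ω | lab n ω = C.lout} := by
      ext ω; simp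
    rw [h]
    exact MeasurableSet.iUnion fun n => ℱ.le n _ (hlab n C.lout)
  rw [← prob_compl_eq_zero_iff hNmeas]
  rw [ae_iff] at hmain
  exact hmain
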